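/- Let A, B, C be finite-dimensional real vector spaces with dim A = l, fitting in a short exact sequence 0 → A →ⁱ B →π C → 0. Suppose β₁, …, β_l ∈ B* are covectors whose restrictions i*β₁, …, i*β_l form a basis of A*. Then for any γ ∈ Λ^{k-l} C*, the residue map satisfies Res(β₁ ∧ … ∧ β_l ∧ π*γ) = γ ⊗ (i*β₁ ∧ … ∧ i*β_l) in Λ^{k-l} C* ⊗ Λˡ A*. -/

import Mathlib

open Module

theorem aux_mk_one {l m : ℕ} (p : Equiv.Perm (Sum (Fin l) (Fin m)))
    (hall : ∀ j : Fin m, ∃ j' : Fin m, p (Sum.inr j) = Sum.inr j') :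
    (Quotient.mk'' p : Equiv.Perm.ModSumCongr (Fin l) (Fin m)) =
      Quotient.mk'' (1 : Equiv.Perm (Sum (Fin l) (Fin m))) := by
  choose fR hfR using hall
  have hinjR : Function.Injective fR := by
    intro x y hxy
    have : p (Sum.inr x) = p (Sum.inr y) := by rw [hfR, hfR, hxy]
    exact Sum.inr_injective (p.injective this)
  have hsurjR : Function.Surjective fR := Finite.surjective_of_injective hinjR
  have hinl : ∀ j : Fin l, ∃ j' : Fin l, p (Sum.inl j) = Sum.inl j' := by
    intro j
    rcases h : p (Sum.inl j) with j' | j'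
    · exact ⟨j', rfl⟩
    · obtain ⟨x, hx⟩ := hsurjR j'
      have : p (Sum.inr x) = p (Sum.inl j) := by rw [hfR, hx, h]
      exact absurd (p.injective this) (by simp)
  choose fL hfL using hinl
  have hinjL : Function.Injective fL := by
    intro x y hxy
    have : p (Sum.inl x) = p (Sum.inl y) := by rw [hfL, hfL, hxy]
    exact Sum.inl_injective (p.injective this)
  have hmem : p ∈ (Equiv.Perm.sumCongrHom (Fin l) (Fin m)).range := by
    refine ⟨(Equiv.ofBijective fL ⟨hinjL, Finite.surjective_of_injective hinjL⟩,
      Equiv.ofBijective fR ⟨hinjR, hsurjR⟩), ?_⟩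
    ext x
    cases x with
    | inl j => simp [Equiv.Perm.sumCongrHom, Equiv.ofBijective_apply, hfL j]; rfl
    | inr j => simp [Equiv.Perm.sumCongrHom, Equiv.ofBijective_apply, hfR j]; rfl
  refine Quotient.sound' (QuotientGroup.leftRel_apply.mpr ?_)
  simpa using inv_mem hmem

theorem aux_sum_vanish {A B C : Type*} [AddCommGroup A] [Module ℝ A] [AddCommGroup B] [Module ℝ B]
    [AddCommGroup C] [Module ℝ C]
    (i : A →ₗ[ℝ] B) (π : B →ₗ[ℝ] C)
    (hex : LinearMap.range i = LinearMap.ker π)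
    {l m : ℕ}
    (f : (Fin l → ℝ) [⋀^Fin l]→ₗ[ℝ] ℝ) (φ : B →ₗ[ℝ] (Fin l → ℝ))
    (γ : C [⋀^Fin m]→ₗ[ℝ] ℝ)
    (σ : C →ₗ[ℝ] B)
    (a : Fin l → A) (c : Fin m → C)
    (q : Equiv.Perm.ModSumCongr (Fin l) (Fin m))
    (hq : q ≠ Quotient.mk'' (1 : Equiv.Perm (Sum (Fin l) (Fin m)))) :
    AlternatingMap.domCoprod.summand (f.compLinearMap φ) (γ.compLinearMap π) q
      (Sum.elim (fun j => i (a j)) (fun j => σ (c j))) = 0 := by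
  induction q using Quotient.inductionOn' with
  | h p =>
    have hp : ¬ ∀ j : Fin m, ∃ j' : Fin m, p (Sum.inr j) = Sum.inr j' :=
      fun hall => hq (aux_mk_one p hall)
    push_neg at hp
    obtain ⟨j, hj⟩ := hp
    obtain ⟨j', hj'⟩ : ∃ j', p (Sum.inr j) = Sum.inl j' := by
      rcases h : p (Sum.inr j) with x | x
      · exact ⟨x, rfl⟩
      · exact absurd h (hj x)
    rw [AlternatingMap.domCoprod.summand_mk'']
    have hzero : (γ.compLinearMap π)
        (fun j₀ : Fin m => Sum.elim (fun j => i (a j)) (fun j => σ (c j)) (p (Sum.inr j₀))) = 0 := by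
      rw [AlternatingMap.compLinearMap_apply]
      apply AlternatingMap.map_coord_zero _ j
      rw [hj']
      simp only [Sum.elim_inl]
      have : i (a j') ∈ LinearMap.ker π := hex ▸ LinearMap.mem_range_self i (a j')
      exact (LinearMap.mem_ker (f := π)).mp this
    simp only [MultilinearMap.smul_apply, MultilinearMap.domDomCongr_apply,
      MultilinearMap.domCoprod_apply, AlternatingMap.coe_multilinearMap]
    rw [hzero, TensorProduct.tmul_zero, smul_zero]

/-- For a short exact sequence `0 → A →ⁱ B →π C → 0` of finite-dimensional real vector
spaces with `dim A = l`, if `β₁, …, β_l ∈ B*` restrict along `i` to a basis of `A*`, then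
for any `γ ∈ Λᵐ C*` the residue of `β₁ ∧ … ∧ β_l ∧ π*γ` is `γ ⊗ (i*β₁ ∧ … ∧ i*β_l)`:
evaluating on vectors `a` of `A` and lifts `σ(c)` of vectors of `C` gives
`γ(c) · det(β_p(i a_q))`. -/
theorem stmt1 {A B C : Type*} [AddCommGroup A] [Module ℝ A] [AddCommGroup B] [Module ℝ B]
    [AddCommGroup C] [Module ℝ C] [FiniteDimensional ℝ A] [FiniteDimensional ℝ B]
    [FiniteDimensional ℝ C]
    (i : A →ₗ[ℝ] B) (π : B →ₗ[ℝ] C)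
    (hi : Function.Injective i) (hπ : Function.Surjective π)
    (hex : LinearMap.range i = LinearMap.ker π)
    {l m : ℕ} (hl : finrank ℝ A = l)
    (β : Fin l → (B →ₗ[ℝ] ℝ))
    (hind : LinearIndependent ℝ (fun j => (β j).comp i))
    (hspan : Submodule.span ℝ (Set.range fun j => (β j).comp i) = ⊤)
    (γ : C [⋀^Fin m]→ₗ[ℝ] ℝ)
    (σ : C →ₗ[ℝ] B) (hσ : π ∘ₗ σ = LinearMap.id)
    (a : Fin l → A) (c : Fin m → C) :
    TensorProduct.lid ℝ ℝ
      ((AlternatingMap.domCoprod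
          ((Matrix.detRowAlternating : (Fin l → ℝ) [⋀^Fin l]→ₗ[ℝ] ℝ).compLinearMap
            (LinearMap.pi β))
          (γ.compLinearMap π))
        (Sum.elim (fun j => i (a j)) (fun j => σ (c j))))
      = γ c * Matrix.det (Matrix.of fun q r => β q (i (a r))) := by
  have key : (AlternatingMap.domCoprod
          ((Matrix.detRowAlternating : (Fin l → ℝ) [⋀^Fin l]→ₗ[ℝ] ℝ).compLinearMap
            (LinearMap.pi β))
          (γ.compLinearMap π))
        (Sum.elim (fun j => i (a j)) (fun j => σ (c j)))
      = AlternatingMap.domCoprod.summand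
          ((Matrix.detRowAlternating : (Fin l → ℝ) [⋀^Fin l]→ₗ[ℝ] ℝ).compLinearMap
            (LinearMap.pi β)) (γ.compLinearMap π)
          (Quotient.mk'' (1 : Equiv.Perm (Sum (Fin l) (Fin m))))
          (Sum.elim (fun j => i (a j)) (fun j => σ (c j))) := by
    show (∑ q : Equiv.Perm.ModSumCongr (Fin l) (Fin m),
        AlternatingMap.domCoprod.summand _ _ q) _ = _
    rw [MultilinearMap.sum_apply]
    exact Finset.sum_eq_single_of_mem _ (Finset.mem_univ _)
      (fun q _ hq => aux_sum_vanish i π hex _ _ γ σ a c q hq)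
  rw [key, AlternatingMap.domCoprod.summand_mk'']
  simp only [MultilinearMap.smul_apply, MultilinearMap.domDomCongr_apply,
    MultilinearMap.domCoprod_apply, AlternatingMap.coe_multilinearMap, Equiv.Perm.sign_one,
    one_smul, Equiv.Perm.coe_one, id_eq, Sum.elim_inl, Sum.elim_inr]
  rw [TensorProduct.lid_tmul]
  have hγ : (γ.compLinearMap π) (fun j => σ (c j)) = γ c := by
    simp only [AlternatingMap.compLinearMap_apply]
    congr 1
    funext j
    exact (congrFun (congrArg DFunLike.coe hσ) (c j) : π (σ (c j)) = c j)
  have hdet : ((Matrix.detRowAlternating : (Fin l → ℝ) [⋀^Fin l]→ₗ[ℝ] ℝ).compLinearMap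
      (LinearMap.pi β)) (fun j => i (a j))
      = Matrix.det (Matrix.of fun q r => β q (i (a r))) := by
    rw [← Matrix.det_transpose]
    rfl
  rw [hγ, hdet]
  simp [mul_comm, smul_eq_mul]
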